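/- There exists a constant C, depending only on ρ₀, such that for all integers k ≥ 0 and all 1 ≤ i ≤ ⌊(k+1)/2⌋, ((k+1)!/(i!(k+1−i)!)) · (k+1)^{−1/2} · L_{ρ,k}/(H_{ρ,4,i−1}·L_{ρ,k+1−i}) ≤ C·(k+2−i)^{1/2}/(i+1). -/

import Mathlib

open MeasureTheory Real Filter

noncomputable section

namespace HypP

/-- Japanese bracket `⟨y⟩ = (1+y²)^{1/2}`. -/
def br (y : ℝ) : ℝ := Real.sqrt (1 + y ^ 2)

/-- Weighting a function of `(x,y)` by `⟨y⟩^e`. -/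
def wt (e : ℝ) (g : ℝ → ℝ → ℝ) : ℝ → ℝ → ℝ := fun x y => br y ^ e * g x y

/-- `m`-th tangential derivative `∂ₓ^m`. -/
def Dx (m : ℕ) (g : ℝ → ℝ → ℝ) : ℝ → ℝ → ℝ :=
  fun x y => iteratedDeriv m (fun x' => g x' y) x

/-- `k`-th normal derivative `∂_y^k`. -/
def Dy (k : ℕ) (g : ℝ → ℝ → ℝ) : ℝ → ℝ → ℝ :=
  fun x y => iteratedDeriv k (fun y' => g x y') y

/-- Squared `L²` norm on the half-plane `ℝ × (0,∞)`. -/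
def sqL2 (g : ℝ → ℝ → ℝ) : ℝ := ∫ x : ℝ, ∫ y in Set.Ioi (0 : ℝ), (g x y) ^ 2

/-- `L²` inner product on the half-plane. -/
def ipL2 (f g : ℝ → ℝ → ℝ) : ℝ := ∫ x : ℝ, ∫ y in Set.Ioi (0 : ℝ), f x y * g x y

/-- Squared `L²ₓL^∞_y` norm on the half-plane. -/
def sqL2xLinfy (g : ℝ → ℝ → ℝ) : ℝ :=
  ∫ x : ℝ, (sSup ((fun y => |g x y|) '' Set.Ioi (0 : ℝ))) ^ 2

/-- The weight `H_{ρ,m,k}`. -/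
def Hc (ρ : ℝ) (m k : ℕ) : ℝ :=
  ρ ^ (m + k + 1) * ((m : ℝ) + (k : ℝ) + 1) ^ 9 /
    (((m + k).factorial : ℝ) * Real.sqrt (m.factorial : ℝ))

/-- The weight `N_{ρ,m} = H_{ρ,m,0}`. -/
def Nc (ρ : ℝ) (m : ℕ) : ℝ := Hc ρ m 0

/-- The weight `L_{ρ,k} = H_{ρ,1,k}`. -/
def Lc (ρ : ℝ) (k : ℕ) : ℝ := Hc ρ 1 k

/-- Squared anisotropic Gevrey norm `‖h‖²_{G^{3/2,1}_{ρ,ℓ}}`. -/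
def gevSq (ρ ℓ : ℝ) (h : ℝ → ℝ → ℝ) : ℝ :=
  (∑' m : ℕ, (Nc ρ m * Real.sqrt (sqL2 (wt (ℓ - 1) (Dx m h)))) ^ 2)
  + ∑' m : ℕ, ∑' k : ℕ,
      (((m : ℝ) + 1) * Hc ρ (m + 1) k *
        Real.sqrt (sqL2 (wt ℓ (Dx m (Dy (k + 1) h))))) ^ 2

/-- Anisotropic Gevrey norm. -/
def gevNorm (ρ ℓ : ℝ) (h : ℝ → ℝ → ℝ) : ℝ := Real.sqrt (gevSq ρ ℓ h)

/-- Membership in the anisotropic Gevrey space `G^{3/2,1}_{ρ,ℓ}`. -/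
def InGev (ρ ℓ : ℝ) (h : ℝ → ℝ → ℝ) : Prop :=
  Summable (fun m : ℕ => (Nc ρ m * Real.sqrt (sqL2 (wt (ℓ - 1) (Dx m h)))) ^ 2) ∧
  Summable (fun p : ℕ × ℕ =>
    (((p.1 : ℝ) + 1) * Hc ρ (p.1 + 1) p.2 *
      Real.sqrt (sqL2 (wt ℓ (Dx p.1 (Dy (p.2 + 1) h))))) ^ 2)

/-- Time derivative `∂ₜ`. -/
def pt (u : ℝ → ℝ → ℝ → ℝ) : ℝ → ℝ → ℝ → ℝ := fun t x y => deriv (fun s => u s x y) t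

/-- Tangential derivative `∂ₓ` (time-dependent functions). -/
def px (u : ℝ → ℝ → ℝ → ℝ) : ℝ → ℝ → ℝ → ℝ := fun t x y => deriv (fun x' => u t x' y) x

/-- Normal derivative `∂_y` (time-dependent functions). -/
def py (u : ℝ → ℝ → ℝ → ℝ) : ℝ → ℝ → ℝ → ℝ := fun t x y => deriv (fun y' => u t x y') y

/-- The normal velocity `v(t,x,y) = -∫₀^y ∂ₓu(t,x,ỹ) dỹ`. -/
def vv (u : ℝ → ℝ → ℝ → ℝ) : ℝ → ℝ → ℝ → ℝ :=
  fun t x y => -∫ s in (0 : ℝ)..y, px u t x s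

/-- The auxiliary function `φ = ∂ₜu + u∂ₓu + v∂_yu`. -/
def phi (u : ℝ → ℝ → ℝ → ℝ) : ℝ → ℝ → ℝ → ℝ :=
  fun t x y => pt u t x y + u t x y * px u t x y + vv u t x y * py u t x y

/-- `u` solves the 2D hyperbolic Prandtl system on `[0,T]`, with the no-slip boundary
condition and decay of `u` at `y → ∞`. -/
def Solves (u : ℝ → ℝ → ℝ → ℝ) (T : ℝ) : Prop :=
  (∀ t ∈ Set.Icc (0 : ℝ) T, ∀ x : ℝ, ∀ y ∈ Set.Ioi (0 : ℝ),
      pt (pt u) t x y + pt u t x y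
        + u t x y * px u t x y + vv u t x y * py u t x y
        + pt (fun t' x' y' => u t' x' y' * px u t' x' y' + vv u t' x' y' * py u t' x' y') t x y
        - py (py u) t x y = 0)
  ∧ (∀ t ∈ Set.Icc (0 : ℝ) T, ∀ x : ℝ, u t x 0 = 0)
  ∧ (∀ t ∈ Set.Icc (0 : ℝ) T, ∀ x : ℝ, Tendsto (fun y => u t x y) atTop (nhds 0))

/-- `U` is the auxiliary function `𝒰` solving
`(∂ₜ + u∂ₓ + v∂_y)∫₀^y 𝒰 dỹ = -∂ₓv`, `𝒰|_{t=0} = 0`. -/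
def AuxU (u U : ℝ → ℝ → ℝ → ℝ) (T : ℝ) : Prop :=
  (∀ t ∈ Set.Icc (0 : ℝ) T, ∀ x : ℝ, ∀ y ∈ Set.Ioi (0 : ℝ),
      pt (fun t' x' y' => ∫ s in (0 : ℝ)..y', U t' x' s) t x y
        + u t x y * px (fun t' x' y' => ∫ s in (0 : ℝ)..y', U t' x' s) t x y
        + vv u t x y * py (fun t' x' y' => ∫ s in (0 : ℝ)..y', U t' x' s) t x y
        = -px (vv u) t x y)
  ∧ (∀ x : ℝ, ∀ y : ℝ, U 0 x y = 0)

/-- The auxiliary function `λ = ∂ₓu - (∂_yu)∫₀^y 𝒰 dỹ`. -/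
def lam (u U : ℝ → ℝ → ℝ → ℝ) : ℝ → ℝ → ℝ → ℝ :=
  fun t x y => px u t x y - py u t x y * ∫ s in (0 : ℝ)..y, U t x s

/-- `|a|²_{X_ρ}` for a time slice `a = (us, Us, ls, fs)` of `(u, 𝒰, λ, φ)`. -/
def Xsq (ρ ℓ : ℝ) (us Us ls fs : ℝ → ℝ → ℝ) : ℝ :=
  (∑' m : ℕ, (Nc ρ (m + 1)) ^ 2 * sqL2 (Dx m Us))
  + (∑' m : ℕ, ((m : ℝ) + 1) * (Nc ρ (m + 1)) ^ 2 * sqL2 (wt (ℓ - 1) (Dx m ls)))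
  + ∑' m : ℕ, ∑' k : ℕ, ((m : ℝ) + 1) ^ 2 * (Hc ρ (m + 1) k) ^ 2 *
      (sqL2 (wt ℓ (Dx m (Dy k fs))) + sqL2 (wt ℓ (Dx m (Dy (k + 1) us))))

/-- `|a|²_{Y_ρ}` for a time slice `a = (us, Us, ls, fs)` of `(u, 𝒰, λ, φ)`. -/
def Ysq (ρ ℓ : ℝ) (us Us ls fs : ℝ → ℝ → ℝ) : ℝ :=
  (∑' m : ℕ, ((m : ℝ) + 1) * (Nc ρ (m + 1)) ^ 2 * sqL2 (Dx m Us))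
  + (∑' m : ℕ, ((m : ℝ) + 1) ^ 2 * (Nc ρ (m + 1)) ^ 2 * sqL2 (wt (ℓ - 1) (Dx m ls)))
  + ∑' m : ℕ, ∑' k : ℕ, ((m : ℝ) + (k : ℝ) + 1) * ((m : ℝ) + 1) ^ 2 * (Hc ρ (m + 1) k) ^ 2 *
      (sqL2 (wt ℓ (Dx m (Dy k fs))) + sqL2 (wt ℓ (Dx m (Dy (k + 1) us))))

/-- `|a|_{X_ρ}`. -/
def Xnorm (ρ ℓ : ℝ) (us Us ls fs : ℝ → ℝ → ℝ) : ℝ := Real.sqrt (Xsq ρ ℓ us Us ls fs)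

/-- `|a|_{Y_ρ}`. -/
def Ynorm (ρ ℓ : ℝ) (us Us ls fs : ℝ → ℝ → ℝ) : ℝ := Real.sqrt (Ysq ρ ℓ us Us ls fs)

end HypP

open HypP

lemma ratio_eq (ρ : ℝ) (hρ : 0 < ρ) (n j : ℕ) :
    Lc ρ (n + j) / (Hc ρ 4 n * Lc ρ j)
      = (ρ⁻¹ ^ 5 * Real.sqrt 24)
        * ((((n:ℝ) + (j:ℝ) + 2) ^ 9) / ((((n:ℝ) + 5) ^ 9) * (((j:ℝ) + 2) ^ 9)))
        * (((n + 4).factorial : ℝ) * ((j + 1).factorial : ℝ) / ((n + j + 1).factorial : ℝ)) := by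
  simp only [Lc, Hc]
  rw [show (1 : ℕ) + (n + j) = n + j + 1 from by omega, show (4 : ℕ) + n = n + 4 from by omega,
    show (1 : ℕ) + j = j + 1 from by omega]
  norm_num [Nat.factorial]
  have h24 : Real.sqrt 24 ≠ 0 := by positivity
  have hfact : ∀ m : ℕ, ((m.factorial : ℝ)) ≠ 0 := fun m => by positivity
  field_simp
  ring

lemma key (ρ₀ ρ : ℝ) (hρ₀ : 0 < ρ₀) (h1 : (Real.exp 1)⁻¹ * ρ₀ ≤ ρ) (h2 : ρ ≤ ρ₀)
    (n j : ℕ) (hj : n + 1 ≤ j) :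
    ((n + j + 1).factorial : ℝ) / (((n + 1).factorial : ℝ) * ((j).factorial : ℝ))
        * (Real.sqrt (((n + j : ℕ) : ℝ) + 1))⁻¹
        * (Lc ρ (n + j) / (Hc ρ 4 n * Lc ρ j))
      ≤ 2560 * Real.exp 5 * (ρ₀ ^ 5)⁻¹ * Real.sqrt ((j : ℝ) + 1) / ((n : ℝ) + 2) := by
  have hρ : 0 < ρ := lt_of_lt_of_le (by positivity) h1
  have hjn : (n : ℝ) + 1 ≤ (j : ℝ) := by exact_mod_cast hj
  have hn0 : (0:ℝ) ≤ n := Nat.cast_nonneg n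
  have hj0 : (0:ℝ) ≤ j := Nat.cast_nonneg j
  have hf4 : ((n+4).factorial : ℝ) = ((n:ℝ)+4)*((n:ℝ)+3)*((n:ℝ)+2)*((n+1).factorial:ℝ) := by
    rw [show n+4 = (n+3)+1 from rfl, Nat.factorial_succ, show n+3 = (n+2)+1 from rfl,
      Nat.factorial_succ, show n+2 = (n+1)+1 from rfl, Nat.factorial_succ]
    push_cast; ring
  have hfj : ((j+1).factorial : ℝ) = ((j:ℝ)+1)*(j.factorial:ℝ) := by
    rw [Nat.factorial_succ]; push_cast; ring
  have hfact : ∀ m : ℕ, (0:ℝ) < (m.factorial : ℝ) := fun m => by positivity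
  have hsq : (0:ℝ) < Real.sqrt (((n + j : ℕ) : ℝ) + 1) := by
    apply Real.sqrt_pos.mpr; push_cast; linarith
  have hF : ((n + j + 1).factorial : ℝ) / (((n + 1).factorial : ℝ) * ((j).factorial : ℝ))
        * (((n + 4).factorial : ℝ) * ((j + 1).factorial : ℝ) / ((n + j + 1).factorial : ℝ))
      = (((n:ℝ)+2)*((n:ℝ)+3)*((n:ℝ)+4)) * ((j:ℝ)+1) := by
    rw [hf4, hfj]
    have ne1 : ((n + j + 1).factorial : ℝ) ≠ 0 := by positivity
    have ne2 : (((n + 1).factorial : ℝ)) ≠ 0 := by positivity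
    have ne3 : ((j.factorial : ℝ)) ≠ 0 := by positivity
    field_simp
  -- main equality
  have heq : ((n + j + 1).factorial : ℝ) / (((n + 1).factorial : ℝ) * ((j).factorial : ℝ))
        * (Real.sqrt (((n + j : ℕ) : ℝ) + 1))⁻¹
        * (Lc ρ (n + j) / (Hc ρ 4 n * Lc ρ j))
      = (ρ⁻¹ ^ 5 * Real.sqrt 24)
        * ((((n:ℝ) + (j:ℝ) + 2) ^ 9 * (((n:ℝ)+2)*((n:ℝ)+3)*((n:ℝ)+4)))
            / ((((n:ℝ) + 5) ^ 9) * (((j:ℝ) + 2) ^ 9)))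
        * (((j:ℝ) + 1) / Real.sqrt (((n + j : ℕ) : ℝ) + 1)) := by
    rw [ratio_eq ρ hρ n j]
    generalize ((n : ℝ) + (j : ℝ) + 2) ^ 9 = A
    generalize ((n : ℝ) + 5) ^ 9 = B
    generalize ((j : ℝ) + 2) ^ 9 = Cc
    generalize Real.sqrt (((n + j : ℕ) : ℝ) + 1) = S
    linear_combination (ρ⁻¹ ^ 5 * Real.sqrt 24) * (A / (B * Cc)) * S⁻¹ * hF
  rw [heq]
  -- bounds on the three factors
  have hP : ρ⁻¹ ^ 5 * Real.sqrt 24 ≤ 5 * (Real.exp 5 * (ρ₀ ^ 5)⁻¹) := by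
    have h24 : Real.sqrt 24 ≤ 5 := by
      nlinarith [Real.sq_sqrt (show (0:ℝ) ≤ 24 by norm_num), Real.sqrt_nonneg 24]
    have hinv : ρ⁻¹ ≤ Real.exp 1 * ρ₀⁻¹ := by
      rw [show Real.exp 1 * ρ₀⁻¹ = ((Real.exp 1)⁻¹ * ρ₀)⁻¹ by
        rw [mul_inv, inv_inv]]
      exact inv_anti₀ (by positivity) h1
    have h5 : ρ⁻¹ ^ 5 ≤ (Real.exp 1 * ρ₀⁻¹) ^ 5 :=
      pow_le_pow_left₀ (by positivity) hinv 5
    have : (Real.exp 1 * ρ₀⁻¹) ^ 5 = Real.exp 5 * (ρ₀ ^ 5)⁻¹ := by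
      rw [mul_pow, ← Real.exp_nat_mul, inv_pow]; norm_num
    calc ρ⁻¹ ^ 5 * Real.sqrt 24 ≤ (Real.exp 5 * (ρ₀ ^ 5)⁻¹) * 5 := by
          apply mul_le_mul (this ▸ h5) h24 (Real.sqrt_nonneg _) (by positivity)
      _ = 5 * (Real.exp 5 * (ρ₀ ^ 5)⁻¹) := by ring
  have hQ : (((n:ℝ) + (j:ℝ) + 2) ^ 9 * (((n:ℝ)+2)*((n:ℝ)+3)*((n:ℝ)+4)))
        / ((((n:ℝ) + 5) ^ 9) * (((j:ℝ) + 2) ^ 9)) ≤ 512 / ((n:ℝ) + 2) := by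
    rw [div_le_div_iff₀ (by positivity) (by positivity)]
    have q1 : ((n:ℝ)+(j:ℝ)+2)^9 ≤ 512 * ((j:ℝ)+2)^9 := by
      calc ((n:ℝ)+(j:ℝ)+2)^9 ≤ (2*((j:ℝ)+2))^9 := by
            apply pow_le_pow_left₀ (by linarith) (by linarith)
        _ = 512 * ((j:ℝ)+2)^9 := by ring
    have q2 : (((n:ℝ)+2)*((n:ℝ)+3)*((n:ℝ)+4)) * ((n:ℝ)+2) ≤ ((n:ℝ)+5)^9 := by
      have a1 : (((n:ℝ)+2)*((n:ℝ)+3)*((n:ℝ)+4)) * ((n:ℝ)+2) ≤ ((n:ℝ)+5)^4 := by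
        nlinarith [sq_nonneg ((n:ℝ)+2), sq_nonneg (n:ℝ)]
      have a2 : ((n:ℝ)+5)^4 ≤ ((n:ℝ)+5)^9 :=
        pow_le_pow_right₀ (by linarith) (by norm_num)
      linarith
    calc ((n:ℝ)+(j:ℝ)+2)^9 * (((n:ℝ)+2)*((n:ℝ)+3)*((n:ℝ)+4)) * ((n:ℝ)+2)
        ≤ (512 * ((j:ℝ)+2)^9) * ((((n:ℝ)+2)*((n:ℝ)+3)*((n:ℝ)+4)) * ((n:ℝ)+2)) := by
          rw [mul_assoc]
          apply mul_le_mul_of_nonneg_right q1 (by positivity)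
      _ ≤ (512 * ((j:ℝ)+2)^9) * ((n:ℝ)+5)^9 := by
          apply mul_le_mul_of_nonneg_left q2 (by positivity)
      _ = 512 * (((n:ℝ)+5)^9 * ((j:ℝ)+2)^9) := by ring
  have hR : ((j:ℝ) + 1) / Real.sqrt (((n + j : ℕ) : ℝ) + 1) ≤ Real.sqrt ((j : ℝ) + 1) := by
    have hs : Real.sqrt ((j:ℝ)+1) ≤ Real.sqrt (((n + j : ℕ) : ℝ) + 1) := by
      apply Real.sqrt_le_sqrt; push_cast; linarith
    calc ((j:ℝ) + 1) / Real.sqrt (((n + j : ℕ) : ℝ) + 1)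
        ≤ ((j:ℝ) + 1) / Real.sqrt ((j:ℝ)+1) := by
          apply div_le_div_of_nonneg_left (by linarith) (Real.sqrt_pos.mpr (by linarith)) hs
      _ = Real.sqrt ((j:ℝ)+1) := Real.div_sqrt
  calc (ρ⁻¹ ^ 5 * Real.sqrt 24)
        * ((((n:ℝ) + (j:ℝ) + 2) ^ 9 * (((n:ℝ)+2)*((n:ℝ)+3)*((n:ℝ)+4)))
            / ((((n:ℝ) + 5) ^ 9) * (((j:ℝ) + 2) ^ 9)))
        * (((j:ℝ) + 1) / Real.sqrt (((n + j : ℕ) : ℝ) + 1))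
      ≤ (5 * (Real.exp 5 * (ρ₀ ^ 5)⁻¹)) * (512 / ((n:ℝ) + 2)) * Real.sqrt ((j : ℝ) + 1) := by
        apply mul_le_mul
        · exact mul_le_mul hP hQ (by positivity) (by positivity)
        · exact hR
        · positivity
        · positivity
    _ = 2560 * Real.exp 5 * (ρ₀ ^ 5)⁻¹ * Real.sqrt ((j : ℝ) + 1) / ((n : ℝ) + 2) := by
        rw [div_eq_mul_inv, div_eq_mul_inv]; ring

/-- estimate (4.8): for `1 ≤ i ≤ ⌊(k+1)/2⌋`,
`((k+1)!/(i!(k+1−i)!)) (k+1)^{-1/2} L_{ρ,k}/(H_{ρ,4,i−1}L_{ρ,k+1−i}) ≤ C(k+2−i)^{1/2}/(i+1)`. -/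
theorem weight_estimate_fe3 (ρ₀ : ℝ) (hρ₀ : 0 < ρ₀) :
    ∃ C : ℝ, 0 < C ∧
      ∀ ρ : ℝ, (Real.exp 1)⁻¹ * ρ₀ ≤ ρ → ρ ≤ ρ₀ →
        ∀ k i : ℕ, 1 ≤ i → i ≤ (k + 1) / 2 →
          ((k + 1).factorial : ℝ) / ((i.factorial : ℝ) * ((k + 1 - i).factorial : ℝ))
              * (Real.sqrt ((k : ℝ) + 1))⁻¹
              * (Lc ρ k / (Hc ρ 4 (i - 1) * Lc ρ (k + 1 - i)))
            ≤ C * Real.sqrt ((k : ℝ) + 2 - (i : ℝ)) / ((i : ℝ) + 1) := by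
  refine ⟨2560 * Real.exp 5 * (ρ₀ ^ 5)⁻¹, by positivity, ?_⟩
  intro ρ h1 h2 k i hi1 hi2
  obtain ⟨n, rfl⟩ : ∃ n, i = n + 1 := ⟨i - 1, (Nat.succ_pred_eq_of_pos hi1).symm⟩
  have h2i : 2 * (n + 1) ≤ k + 1 := by
    have := (Nat.le_div_iff_mul_le (by norm_num : 0 < 2)).mp hi2
    omega
  obtain ⟨j, hj, rfl⟩ : ∃ j, n + 1 ≤ j ∧ k = n + j := ⟨k - n, by omega, by omega⟩
  have h := key ρ₀ ρ hρ₀ h1 h2 n j hj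
  rw [show n + j + 1 - (n + 1) = j from by omega, show n + 1 - 1 = n from by omega]
  have e1 : ((n + j : ℕ) : ℝ) + 2 - ((n + 1 : ℕ) : ℝ) = (j : ℝ) + 1 := by push_cast; ring
  have e2 : ((n + 1 : ℕ) : ℝ) + 1 = (n : ℝ) + 2 := by push_cast; ring
  rw [e1, e2]
  exact h
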